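/- Let ξ be a positive random variable with continuous distribution, and F a cumulative distribution function with finite first moment against ξ. Among all random variables X with distribution F, the choice X* = F^{-1}(1 − F_ξ(ξ)) minimizes E[ξX]. That is, for any X ~ F, E[ξ X*] ≤ E[ξ X]. -/

import Mathlib

open MeasureTheory Set Filter
open scoped ENNReal NNReal

section CostEffAux

variable {Ω : Type*} [MeasurableSpace Ω] (P : Measure Ω) [IsProbabilityMeasure P]

/-- toReal of a near-boundary measure: `P {ξ < q}` has the same `toReal` as `P {ξ ≤ q}`
when the CDF of `ξ` is continuous. -/
lemma costeff_meas_lt (Z : Ω → ℝ)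
    (hc : Continuous (fun x => (P {ω | Z ω ≤ x}).toReal)) (q : ℝ) :
    (P {ω | Z ω < q}).toReal = (P {ω | Z ω ≤ q}).toReal := by
  apply le_antisymm
  · exact ENNReal.toReal_mono (measure_ne_top _ _)
      (measure_mono (setOf_subset_setOf.mpr fun ω hω => le_of_lt hω))
  · refine le_of_forall_pos_le_add ?_
    intro ε hε
    obtain ⟨δ, hδ, hball⟩ := Metric.continuousAt_iff.mp (hc.continuousAt (x := q)) ε hε
    have hd : dist (q - δ/2) q < δ := by
      rw [Real.dist_eq, abs_of_nonpos (by linarith)]; linarith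
    have h1 := hball hd
    rw [Real.dist_eq] at h1
    have h2 := abs_lt.mp h1
    have h3 : (P {ω | Z ω ≤ q - δ/2}).toReal ≤ (P {ω | Z ω < q}).toReal :=
      ENNReal.toReal_mono (measure_ne_top _ _)
        (measure_mono (setOf_subset_setOf.mpr fun ω hω => lt_of_le_of_lt hω (by linarith)))
    linarith [h2.2, h3]

/-- Swap lemma (lower): among measurable sets `A` with `P {ξ < q} ≤ P A`, the lower set
`{ξ < q}` has minimal `∫ ξ`-measure. -/
lemma costeff_swap_lower (ξ : Ω → ℝ) (hξm : Measurable ξ) (q : ℝ) (A : Set Ω)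
    (hA : MeasurableSet A) (hP : P {ω | ξ ω < q} ≤ P A) :
    P.withDensity (fun ω => ENNReal.ofReal (ξ ω)) {ω | ξ ω < q}
      ≤ P.withDensity (fun ω => ENNReal.ofReal (ξ ω)) A := by
  set φ : Ω → ℝ≥0∞ := fun ω => ENNReal.ofReal (ξ ω) with hφdef
  set ν := P.withDensity φ with hνdef
  set B : Set Ω := {ω | ξ ω < q} with hBdef
  have hBm : MeasurableSet B := measurableSet_lt hξm measurable_const
  have hφm : Measurable φ := hξm.ennreal_ofReal
  have hPBA : P (B \ A) ≤ P (A \ B) := by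
    have h1 : P (B ∩ A) + P (B \ A) ≤ P (B ∩ A) + P (A \ B) := by
      rw [measure_inter_add_diff B hA, inter_comm B A, measure_inter_add_diff A hBm]
      exact hP
    exact (ENNReal.add_le_add_iff_left (measure_ne_top _ _)).mp h1
  have h1 : ν (B \ A) ≤ ENNReal.ofReal q * P (B \ A) := by
    rw [hνdef, withDensity_apply _ (hBm.diff hA)]
    calc ∫⁻ ω in B \ A, φ ω ∂P
        ≤ ∫⁻ _ in B \ A, ENNReal.ofReal q ∂P :=
          setLIntegral_mono measurable_const
            (fun ω hω => ENNReal.ofReal_le_ofReal (le_of_lt hω.1))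
      _ = ENNReal.ofReal q * P (B \ A) := setLIntegral_const _ _
  have h2 : ENNReal.ofReal q * P (A \ B) ≤ ν (A \ B) := by
    rw [hνdef, withDensity_apply _ (hA.diff hBm)]
    calc ENNReal.ofReal q * P (A \ B)
        = ∫⁻ _ in A \ B, ENNReal.ofReal q ∂P := (setLIntegral_const _ _).symm
      _ ≤ ∫⁻ ω in A \ B, φ ω ∂P :=
          setLIntegral_mono hφm
            (fun ω hω => ENNReal.ofReal_le_ofReal (not_lt.mp hω.2))
  calc ν B = ν (B ∩ A) + ν (B \ A) := (measure_inter_add_diff B hA).symm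
    _ ≤ ν (B ∩ A) + ENNReal.ofReal q * P (B \ A) := add_le_add_right h1 _
    _ ≤ ν (B ∩ A) + ENNReal.ofReal q * P (A \ B) :=
        add_le_add_right (mul_le_mul_right hPBA _) _
    _ ≤ ν (B ∩ A) + ν (A \ B) := add_le_add_right h2 _
    _ = ν (A ∩ B) + ν (A \ B) := by rw [inter_comm]
    _ = ν A := measure_inter_add_diff A hBm

/-- Swap lemma (upper): among measurable sets `A` with `P A ≤ P {q < ξ}`, the upper set
`{q < ξ}` has maximal `∫ ξ`-measure. -/
lemma costeff_swap_upper (ξ : Ω → ℝ) (hξm : Measurable ξ) (q : ℝ) (A : Set Ω)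
    (hA : MeasurableSet A) (hP : P A ≤ P {ω | q < ξ ω}) :
    P.withDensity (fun ω => ENNReal.ofReal (ξ ω)) A
      ≤ P.withDensity (fun ω => ENNReal.ofReal (ξ ω)) {ω | q < ξ ω} := by
  set φ : Ω → ℝ≥0∞ := fun ω => ENNReal.ofReal (ξ ω) with hφdef
  set ν := P.withDensity φ with hνdef
  set B : Set Ω := {ω | q < ξ ω} with hBdef
  have hBm : MeasurableSet B := measurableSet_lt measurable_const hξm
  have hφm : Measurable φ := hξm.ennreal_ofReal
  have hPAB : P (A \ B) ≤ P (B \ A) := by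
    have h1 : P (A ∩ B) + P (A \ B) ≤ P (A ∩ B) + P (B \ A) := by
      rw [measure_inter_add_diff A hBm, inter_comm A B, measure_inter_add_diff B hA]
      exact hP
    exact (ENNReal.add_le_add_iff_left (measure_ne_top _ _)).mp h1
  have h1 : ν (A \ B) ≤ ENNReal.ofReal q * P (A \ B) := by
    rw [hνdef, withDensity_apply _ (hA.diff hBm)]
    calc ∫⁻ ω in A \ B, φ ω ∂P
        ≤ ∫⁻ _ in A \ B, ENNReal.ofReal q ∂P :=
          setLIntegral_mono measurable_const
            (fun ω hω => ENNReal.ofReal_le_ofReal (not_lt.mp hω.2))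
      _ = ENNReal.ofReal q * P (A \ B) := setLIntegral_const _ _
  have h2 : ENNReal.ofReal q * P (B \ A) ≤ ν (B \ A) := by
    rw [hνdef, withDensity_apply _ (hBm.diff hA)]
    calc ENNReal.ofReal q * P (B \ A)
        = ∫⁻ _ in B \ A, ENNReal.ofReal q ∂P := (setLIntegral_const _ _).symm
      _ ≤ ∫⁻ ω in B \ A, φ ω ∂P :=
          setLIntegral_mono hφm
            (fun ω hω => ENNReal.ofReal_le_ofReal (le_of_lt hω.1))
  calc ν A = ν (A ∩ B) + ν (A \ B) := (measure_inter_add_diff A hBm).symm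
    _ ≤ ν (A ∩ B) + ENNReal.ofReal q * P (A \ B) := add_le_add_right h1 _
    _ ≤ ν (A ∩ B) + ENNReal.ofReal q * P (B \ A) :=
        add_le_add_right (mul_le_mul_right hPAB _) _
    _ ≤ ν (A ∩ B) + ν (B \ A) := add_le_add_right h2 _
    _ = ν (B ∩ A) + ν (B \ A) := by rw [inter_comm]
    _ = ν B := measure_inter_add_diff B hA

/-- The CDF of any random variable approaches 1: values below 1 are exceeded. -/
lemma costeff_sup_cdf (Z : Ω → ℝ) (c : ℝ) (hc : c < 1) :
    ∃ x : ℝ, c < (P {ω | Z ω ≤ x}).toReal := by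
  rcases lt_or_ge c 0 with hc0 | hc0
  · exact ⟨0, lt_of_lt_of_le hc0 ENNReal.toReal_nonneg⟩
  have hmono : Monotone (fun n : ℕ => {ω | Z ω ≤ (n : ℝ)}) := by
    intro m n hmn
    refine setOf_subset_setOf.mpr fun ω hω => le_trans hω ?_
    exact_mod_cast hmn
  have hU : (⋃ n : ℕ, {ω | Z ω ≤ (n : ℝ)}) = univ := by
    ext ω
    simp only [mem_iUnion, mem_setOf_eq, mem_univ, iff_true]
    exact exists_nat_ge (Z ω)
  have hmeas := hmono.directed_le.measure_iUnion (μ := P)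
  rw [hU, measure_univ] at hmeas
  have hlt : ENNReal.ofReal c < ⨆ n : ℕ, P {ω | Z ω ≤ (n : ℝ)} := by
    rw [← hmeas]; exact ENNReal.ofReal_lt_one.mpr hc
  obtain ⟨n, hn⟩ := lt_iSup_iff.mp hlt
  refine ⟨n, ?_⟩
  have := (ENNReal.toReal_lt_toReal ENNReal.ofReal_ne_top (measure_ne_top _ _)).mpr hn
  rwa [ENNReal.toReal_ofReal hc0] at this

/-- The CDF of any random variable approaches 0 at `-∞`. -/
lemma costeff_inf_cdf (Z : Ω → ℝ) (hZm : Measurable Z) (c : ℝ) (hc : 0 < c) :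
    ∃ x : ℝ, (P {ω | Z ω ≤ x}).toReal < c := by
  have hanti : Antitone (fun n : ℕ => {ω | Z ω ≤ -(n : ℝ)}) := by
    intro m n hmn
    refine setOf_subset_setOf.mpr fun ω hω => le_trans hω ?_
    simp only [neg_le_neg_iff]
    exact_mod_cast hmn
  have hI : (⋂ n : ℕ, {ω | Z ω ≤ -(n : ℝ)}) = ∅ := by
    ext ω
    simp only [mem_iInter, mem_setOf_eq, mem_empty_iff_false, iff_false, not_forall, not_le]
    obtain ⟨n, hn⟩ := exists_nat_gt (-(Z ω))
    exact ⟨n, by linarith⟩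
  have hmeas := Directed.measure_iInter (μ := P)
    (fun n => ((measurableSet_le hZm measurable_const).nullMeasurableSet))
    (hanti.directed_ge) ⟨0, measure_ne_top _ _⟩
  rw [hI, measure_empty] at hmeas
  have hlt : (⨅ n : ℕ, P {ω | Z ω ≤ -(n : ℝ)}) < ENNReal.ofReal c := by
    rw [← hmeas]; exact ENNReal.ofReal_pos.mpr hc
  obtain ⟨n, hn⟩ := iInf_lt_iff.mp hlt
  refine ⟨-(n : ℝ), ?_⟩
  have := (ENNReal.toReal_lt_toReal (measure_ne_top _ _) ENNReal.ofReal_ne_top).mpr hn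
  rwa [ENNReal.toReal_ofReal hc.le] at this

/-- The event `{F_ξ(ξ) = 1}` is null when `F_ξ` is continuous and `ξ > 0`. -/
lemma costeff_null_top (ξ : Ω → ℝ) (hξm : Measurable ξ) (hξpos : ∀ ω, 0 < ξ ω)
    (hc : Continuous (fun x => (P {ω | ξ ω ≤ x}).toReal)) :
    P {ω | (P {ω' | ξ ω' ≤ ξ ω}).toReal = 1} = 0 := by
  set Fξ : ℝ → ℝ := fun x => (P {ω | ξ ω ≤ x}).toReal with hFdef
  have hF0 : Fξ 0 = 0 := by
    have hempty : {ω | ξ ω ≤ (0 : ℝ)} = ∅ :=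
      eq_empty_iff_forall_notMem.mpr fun ω hω => absurd hω (not_le.mpr (hξpos ω))
    simp only [hFdef, hempty, measure_empty, ENNReal.toReal_zero]
  have hFmono : Monotone Fξ := fun a b hab =>
    ENNReal.toReal_mono (measure_ne_top _ _) (measure_mono (setOf_subset_setOf.mpr fun ω hω => le_trans hω hab))
  by_cases hM : {x : ℝ | Fξ x = 1}.Nonempty
  · have hclosed : IsClosed {x : ℝ | Fξ x = 1} := isClosed_eq hc continuous_const
    have hbdd : BddBelow {x : ℝ | Fξ x = 1} := by
      refine ⟨0, fun x hx => ?_⟩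
      by_contra hx0
      push_neg at hx0
      have : Fξ 0 = 1 := le_antisymm
        (by
          have := hF0
          linarith [this])
        (by
          have h1 := hFmono hx0.le
          rw [hx] at h1
          linarith [h1])
      rw [hF0] at this
      norm_num at this
    set m := sInf {x : ℝ | Fξ x = 1} with hm
    have hmmem : Fξ m = 1 := hclosed.csInf_mem hM hbdd
    have hsub : {ω | Fξ (ξ ω) = 1} ⊆ {ω | ξ ω < m}ᶜ := by
      intro ω hω
      simp only [mem_compl_iff, mem_setOf_eq, not_lt]
      exact csInf_le hbdd hω
    refine measure_mono_null hsub ?_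
    have hPlt : P {ω | ξ ω < m} = 1 := by
      rw [← ENNReal.toReal_eq_one_iff]
      rw [costeff_meas_lt P ξ hc m]
      exact hmmem
    rw [measure_compl (measurableSet_lt hξm measurable_const) (measure_ne_top _ _),
      measure_univ, hPlt, tsub_self]
  · have hsub : {ω | (P {ω' | ξ ω' ≤ ξ ω}).toReal = 1} ⊆ (∅ : Set Ω) :=
      fun ω hω => absurd (⟨ξ ω, hω⟩ : {x : ℝ | Fξ x = 1}.Nonempty) hM
    exact measure_mono_null hsub measure_empty

end CostEffAux

/-- Cost-efficiency: among all payoffs with distribution `F`, the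
anti-monotonic payoff `X* = F⁻¹(1 − F_ξ(ξ))` minimizes the cost `E[ξ X]`. -/
theorem cost_efficiency
    {Ω : Type*} [MeasurableSpace Ω] (P : Measure Ω) [IsProbabilityMeasure P]
    (ξ X : Ω → ℝ) (hξm : Measurable ξ) (hXm : Measurable X) (hξpos : ∀ ω, 0 < ξ ω)
    (hξcont : Continuous (fun x => (P {ω | ξ ω ≤ x}).toReal))
    (F : ℝ → ℝ) (hXF : ∀ x, F x = (P {ω | X ω ≤ x}).toReal)
    (Xstar : Ω → ℝ)
    (hXstar : ∀ ω, Xstar ω =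
      sInf {t : ℝ | 1 - (P {ω' | ξ ω' ≤ ξ ω}).toReal ≤ F t})
    (hint1 : Integrable (fun ω => ξ ω * X ω) P)
    (hint2 : Integrable (fun ω => ξ ω * Xstar ω) P) :
    ∫ ω, ξ ω * Xstar ω ∂P ≤ ∫ ω, ξ ω * X ω ∂P := by
  classical
  set Fξ : ℝ → ℝ := fun x => (P {ω | ξ ω ≤ x}).toReal with hFξdef
  set φ : Ω → ℝ≥0∞ := fun ω => ENNReal.ofReal (ξ ω) with hφdef
  set ν := P.withDensity φ with hνdef
  have hφm : Measurable φ := hξm.ennreal_ofReal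
  have hνac : ν ≪ P := withDensity_absolutelyContinuous P φ
  -- basic facts on F and Fξ
  have hFξmono : Monotone Fξ := fun a b hab =>
    ENNReal.toReal_mono (measure_ne_top _ _) (measure_mono (setOf_subset_setOf.mpr fun ω hω => le_trans hω hab))
  have hFξ0 : ∀ x, 0 ≤ Fξ x := fun x => ENNReal.toReal_nonneg
  have hFξ1 : ∀ x, Fξ x ≤ 1 := fun x => by
    have h := (ENNReal.toReal_le_toReal (measure_ne_top _ _) ENNReal.one_ne_top).mpr
      (prob_le_one (μ := P) (s := {ω | ξ ω ≤ x}))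
    simpa using h
  have hFξzero : Fξ 0 = 0 := by
    have hempty : {ω | ξ ω ≤ (0 : ℝ)} = ∅ :=
      eq_empty_iff_forall_notMem.mpr fun ω hω => absurd hω (not_le.mpr (hξpos ω))
    simp only [hFξdef, hempty, measure_empty, ENNReal.toReal_zero]
  have hFmono : Monotone F := by
    intro a b hab
    rw [hXF a, hXF b]
    exact ENNReal.toReal_mono (measure_ne_top _ _) (measure_mono (setOf_subset_setOf.mpr fun ω hω => le_trans hω hab))
  have hF0 : ∀ t, 0 ≤ F t := fun t => by rw [hXF t]; exact ENNReal.toReal_nonneg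
  have hF1 : ∀ t, F t ≤ 1 := fun t => by
    rw [hXF t]
    have h := (ENNReal.toReal_le_toReal (measure_ne_top _ _) ENNReal.one_ne_top).mpr
      (prob_le_one (μ := P) (s := {ω | X ω ≤ t}))
    simpa using h
  -- X star is a.e. measurable
  have hXsaem : AEMeasurable Xstar P := by
    have h1 : AEMeasurable (fun ω => ξ ω * Xstar ω) P := hint2.1.aemeasurable
    have h2 : Xstar = fun ω => (ξ ω * Xstar ω) / ξ ω := by
      funext ω
      field_simp [(hξpos ω).ne']
    rw [h2]
    exact h1.div hξm.aemeasurable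
  -- the null set where Fξ(ξ) = 1
  have hN : P {ω | Fξ (ξ ω) = 1} = 0 := costeff_null_top P ξ hξm hξpos hξcont
  have hνN : ν {ω | Fξ (ξ ω) = 1} = 0 := hνac hN
  -- the set S_ω is bounded below off the null set
  have hSbdd : ∀ ω, Fξ (ξ ω) ≠ 1 → BddBelow {t : ℝ | 1 - Fξ (ξ ω) ≤ F t} := by
    intro ω hω1
    by_contra hnb
    rw [not_bddBelow_iff] at hnb
    have hall : ∀ t : ℝ, 1 - Fξ (ξ ω) ≤ F t := by
      intro t
      obtain ⟨y, hy, hyt⟩ := hnb t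
      exact le_trans hy (hFmono hyt.le)
    have hlt1 : Fξ (ξ ω) < 1 := lt_of_le_of_ne (hFξ1 _) hω1
    obtain ⟨t0, ht0⟩ := costeff_inf_cdf P X hXm (1 - Fξ (ξ ω)) (by linarith)
    have := hall t0
    rw [hXF t0] at this
    linarith
  -- KEY LEMMA (lower): ν {s < Xstar} ≤ ν {s < X}
  have key_gt : ∀ s : ℝ, ν {ω | s < Xstar ω} ≤ ν {ω | s < X ω} := by
    intro s
    set A : Set Ω := {ω | s < X ω} with hAdef
    have hAm : MeasurableSet A := measurableSet_lt measurable_const hXm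
    set u : ℝ := 1 - F s with hudef
    have hPAval : (P A).toReal = u := by
      have hAc : A = {ω | X ω ≤ s}ᶜ := by
        ext ω; simp [hAdef, not_le]
      rw [hAc, measure_compl (measurableSet_le hXm measurable_const) (measure_ne_top _ _), measure_univ,
        ENNReal.toReal_sub_of_le prob_le_one ENNReal.one_ne_top, ENNReal.toReal_one,
        hudef, hXF s]
    have hsub1 : {ω | s < Xstar ω} ⊆ {ω | Fξ (ξ ω) < u} ∪ {ω | Fξ (ξ ω) = 1} := by
      intro ω hω
      by_cases hN1 : Fξ (ξ ω) = 1
      · exact Or.inr hN1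
      left
      show Fξ (ξ ω) < u
      by_contra hcon
      push_neg at hcon
      have hsS : s ∈ {t : ℝ | 1 - Fξ (ξ ω) ≤ F t} := by
        simp only [mem_setOf_eq]
        have : u ≤ Fξ (ξ ω) := hcon
        rw [hudef] at this
        linarith
      have hXs : Xstar ω ≤ s := by
        rw [hXstar ω]
        exact csInf_le (hSbdd ω hN1) hsS
      exact absurd hω (not_lt.mpr hXs)
    refine le_trans (measure_mono hsub1) (le_trans (measure_union_le _ _) ?_)
    rw [hνN, add_zero]
    rcases le_or_gt u 0 with hu0 | hu0
    · have hempty : {ω | Fξ (ξ ω) < u} = ∅ :=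
        eq_empty_iff_forall_notMem.mpr fun ω hω =>
          absurd (lt_of_lt_of_le hω hu0) (not_lt.mpr (hFξ0 _))
      simp [hempty]
    by_cases hbdd : BddAbove {x : ℝ | Fξ x < u}
    · set q := sSup {x : ℝ | Fξ x < u} with hqdef
      have hne : {x : ℝ | Fξ x < u}.Nonempty := ⟨0, by simpa [hFξzero] using hu0⟩
      have hD : {x : ℝ | Fξ x < u} = Iio q := by
        apply Subset.antisymm
        · intro x hx
          obtain ⟨δ, hδ, hball⟩ := Metric.continuousAt_iff.mp
            (hξcont.continuousAt (x := x)) (u - Fξ x)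
            (by have hx' : Fξ x < u := hx; linarith)
          have hd : dist (x + δ/2) x < δ := by
            rw [Real.dist_eq, abs_of_nonneg (by linarith)]; linarith
          have h1 := hball hd
          rw [Real.dist_eq] at h1
          have h2 := abs_lt.mp h1
          have hx2 : x + δ/2 ∈ {x : ℝ | Fξ x < u} := by
            simp only [mem_setOf_eq]
            have := h2.2
            linarith
          have hle := le_csSup hbdd hx2
          simp only [mem_Iio]
          linarith
        · intro x hx
          obtain ⟨y, hy, hxy⟩ := exists_lt_of_lt_csSup hne hx
          exact lt_of_le_of_lt (hFξmono hxy.le) hy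
      have hFq : Fξ q ≤ u := by
        by_contra hcon
        push_neg at hcon
        obtain ⟨δ, hδ, hball⟩ := Metric.continuousAt_iff.mp
          (hξcont.continuousAt (x := q)) (Fξ q - u) (by linarith)
        have hd : dist (q - δ/2) q < δ := by
          rw [Real.dist_eq, abs_of_nonpos (by linarith)]; linarith
        have h1 := hball hd
        rw [Real.dist_eq] at h1
        have h2 := abs_lt.mp h1
        have hmem : q - δ/2 ∈ {x : ℝ | Fξ x < u} := by
          rw [hD]; simp only [mem_Iio]; linarith
        simp only [mem_setOf_eq] at hmem
        have := h2.1
        linarith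
      have hBeq : {ω | Fξ (ξ ω) < u} = {ω | ξ ω < q} := by
        ext ω
        simp only [mem_setOf_eq]
        constructor
        · intro h
          have : ξ ω ∈ {x : ℝ | Fξ x < u} := h
          rwa [hD, mem_Iio] at this
        · intro h
          have : ξ ω ∈ Iio q := mem_Iio.mpr h
          rw [← hD] at this
          exact this
      have hPB : P {ω | ξ ω < q} ≤ P A := by
        rw [← ENNReal.toReal_le_toReal (measure_ne_top _ _) (measure_ne_top _ _)]
        rw [hPAval]
        calc (P {ω | ξ ω < q}).toReal = (P {ω | ξ ω ≤ q}).toReal :=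
              costeff_meas_lt P ξ hξcont q
          _ = Fξ q := rfl
          _ ≤ u := hFq
      rw [hBeq]
      exact costeff_swap_lower P ξ hξm q A hAm hPB
    · -- unbounded case: u = 1 and P {X ≤ s} = 0
      have hu1 : 1 ≤ u := by
        by_contra hcon
        push_neg at hcon
        obtain ⟨x, hx⟩ := costeff_sup_cdf P ξ u hcon
        refine hbdd ⟨x, fun y hy => ?_⟩
        by_contra hxy
        push_neg at hxy
        have : u < Fξ y := lt_of_lt_of_le hx (hFξmono hxy.le)
        simp only [mem_setOf_eq] at hy
        linarith
      have hFs : F s = 0 := le_antisymm (by rw [hudef] at hu1; linarith) (hF0 s)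
      have hPXs : P {ω | X ω ≤ s} = 0 := by
        have h1 : (P {ω | X ω ≤ s}).toReal = 0 := by rw [← hXF s]; exact hFs
        rcases (ENNReal.toReal_eq_zero_iff _).mp h1 with h | h
        · exact h
        · exact absurd h (measure_ne_top _ _)
      calc ν {ω | Fξ (ξ ω) < u}
          = ν ({ω | Fξ (ξ ω) < u} ∩ A) + ν ({ω | Fξ (ξ ω) < u} \ A) :=
            (measure_inter_add_diff _ hAm).symm
        _ ≤ ν A + ν {ω | X ω ≤ s} := by
            refine add_le_add (measure_mono inter_subset_right) (measure_mono ?_)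
            intro ω hω
            have h2 : ¬ s < X ω := hω.2
            exact not_lt.mp h2
        _ = ν A := by rw [hνac hPXs, add_zero]
  -- KEY LEMMA (upper): ν {X < s} ≤ ν {Xstar < s}
  have key_lt : ∀ s : ℝ, ν {ω | X ω < s} ≤ ν {ω | Xstar ω < s} := by
    intro s
    have hU : {ω | X ω < s} = ⋃ n : ℕ, {ω | X ω ≤ s - 1/((n : ℝ)+1)} := by
      ext ω
      simp only [mem_iUnion, mem_setOf_eq]
      constructor
      · intro h
        obtain ⟨n, hn⟩ := exists_nat_one_div_lt (show (0:ℝ) < s - X ω by linarith)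
        exact ⟨n, by linarith⟩
      · rintro ⟨n, hn⟩
        have hpos : (0:ℝ) < 1/((n : ℝ)+1) := by positivity
        linarith
    have hmono : Monotone (fun n : ℕ => {ω | X ω ≤ s - 1/((n : ℝ)+1)}) := by
      intro m n hmn ω hω
      simp only [mem_setOf_eq] at hω ⊢
      have h1 : 1/((n : ℝ)+1) ≤ 1/((m : ℝ)+1) := by
        apply one_div_le_one_div_of_le (by positivity)
        have : (m : ℝ) ≤ (n : ℝ) := by exact_mod_cast hmn
        linarith
      linarith
    rw [hU, hmono.directed_le.measure_iUnion]
    apply iSup_le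
    intro n
    set a : ℝ := s - 1/((n : ℝ)+1) with hadef
    have has : a < s := by
      have hpos : (0:ℝ) < 1/((n : ℝ)+1) := by positivity
      rw [hadef]; linarith
    set v : ℝ := 1 - F a with hvdef
    have hv0 : 0 ≤ v := by have := hF1 a; rw [hvdef]; linarith
    by_cases hE : {x : ℝ | v < Fξ x}.Nonempty
    · -- main case
      have hbddB : BddBelow {x : ℝ | v < Fξ x} := by
        refine ⟨0, fun x hx => ?_⟩
        by_contra hx0
        push_neg at hx0
        simp only [mem_setOf_eq] at hx
        have : Fξ x ≤ Fξ 0 := hFξmono hx0.le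
        rw [hFξzero] at this
        linarith
      set q := sInf {x : ℝ | v < Fξ x} with hqdef
      have hE' : {x : ℝ | v < Fξ x} = Ioi q := by
        apply Subset.antisymm
        · intro x hx
          simp only [mem_setOf_eq] at hx
          obtain ⟨δ, hδ, hball⟩ := Metric.continuousAt_iff.mp
            (hξcont.continuousAt (x := x)) (Fξ x - v) (by linarith)
          have hd : dist (x - δ/2) x < δ := by
            rw [Real.dist_eq, abs_of_nonpos (by linarith)]; linarith
          have h1 := hball hd
          rw [Real.dist_eq] at h1
          have h2 := abs_lt.mp h1
          have hx2 : x - δ/2 ∈ {x : ℝ | v < Fξ x} := by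
            simp only [mem_setOf_eq]
            have := h2.1
            linarith
          have hle := csInf_le hbddB hx2
          simp only [mem_Ioi]
          linarith
        · intro x hx
          obtain ⟨y, hy, hyx⟩ := exists_lt_of_csInf_lt hE hx
          simp only [mem_setOf_eq] at hy ⊢
          exact lt_of_lt_of_le hy (hFξmono hyx.le)
      have hFq : Fξ q ≤ v := by
        by_contra hcon
        push_neg at hcon
        have hmem : q ∈ {x : ℝ | v < Fξ x} := hcon
        rw [hE'] at hmem
        exact lt_irrefl q hmem
      have hsub : {ω | q < ξ ω} ⊆ {ω | Xstar ω < s} ∪ {ω | Fξ (ξ ω) = 1} := by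
        intro ω hω
        by_cases hN1 : Fξ (ξ ω) = 1
        · exact Or.inr hN1
        left
        have hωE : ξ ω ∈ {x : ℝ | v < Fξ x} := by rw [hE']; exact hω
        simp only [mem_setOf_eq] at hωE
        have haS : a ∈ {t : ℝ | 1 - Fξ (ξ ω) ≤ F t} := by
          simp only [mem_setOf_eq]
          rw [hvdef] at hωE
          linarith
        have hXs : Xstar ω ≤ a := by
          rw [hXstar ω]
          exact csInf_le (hSbdd ω hN1) haS
        simp only [mem_setOf_eq]
        linarith
      have hPle : P {ω | X ω ≤ a} ≤ P {ω | q < ξ ω} := by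
        rw [← ENNReal.toReal_le_toReal (measure_ne_top _ _) (measure_ne_top _ _)]
        have h1 : (P {ω | q < ξ ω}).toReal = 1 - Fξ q := by
          have hc : {ω | q < ξ ω} = {ω | ξ ω ≤ q}ᶜ := by
            ext ω; simp [not_le]
          rw [hc, measure_compl (measurableSet_le hξm measurable_const) (measure_ne_top _ _), measure_univ,
            ENNReal.toReal_sub_of_le prob_le_one ENNReal.one_ne_top, ENNReal.toReal_one]
        rw [h1, ← hXF a]
        rw [hvdef] at hFq
        linarith
      calc ν {ω | X ω ≤ a}
          ≤ ν {ω | q < ξ ω} :=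
            costeff_swap_upper P ξ hξm q _ (measurableSet_le hXm measurable_const) hPle
        _ ≤ ν ({ω | Xstar ω < s} ∪ {ω | Fξ (ξ ω) = 1}) := measure_mono hsub
        _ ≤ ν {ω | Xstar ω < s} + ν {ω | Fξ (ξ ω) = 1} := measure_union_le _ _
        _ = ν {ω | Xstar ω < s} := by rw [hνN, add_zero]
    · -- E empty: F a = 0, so the set {X ≤ a} is ν-null
      rw [not_nonempty_iff_eq_empty] at hE
      have hv1 : 1 ≤ v := by
        by_contra hcon
        push_neg at hcon
        obtain ⟨x, hx⟩ := costeff_sup_cdf P ξ v hcon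
        have hmem : x ∈ {x : ℝ | v < Fξ x} := hx
        rw [hE] at hmem
        exact hmem
      have hFa : F a = 0 := le_antisymm (by rw [hvdef] at hv1; linarith) (hF0 a)
      have hPXa : P {ω | X ω ≤ a} = 0 := by
        have h1 : (P {ω | X ω ≤ a}).toReal = 0 := by rw [← hXF a]; exact hFa
        rcases (ENNReal.toReal_eq_zero_iff _).mp h1 with h | h
        · exact h
        · exact absurd h (measure_ne_top _ _)
      rw [hνac hPXa]
      exact zero_le
  -- layer-cake representations
  have hlayer : ∀ (Y : Ω → ℝ), AEMeasurable Y P →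
      ∫⁻ ω, ENNReal.ofReal (ξ ω * Y ω) ∂P = ∫⁻ t in Ioi (0:ℝ), ν {ω | t < Y ω} := by
    intro Y hY
    have h1 : ∫⁻ ω, ENNReal.ofReal (ξ ω * Y ω) ∂P
        = ∫⁻ ω, (φ * fun ω => ENNReal.ofReal (Y ω)) ω ∂P := by
      apply lintegral_congr
      intro ω
      simp only [Pi.mul_apply, hφdef]
      exact ENNReal.ofReal_mul (hξpos ω).le
    rw [h1, ← lintegral_withDensity_eq_lintegral_mul₀ hφm.aemeasurable hY.ennreal_ofReal,
      ← hνdef]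
    have h2 : ∫⁻ ω, ENNReal.ofReal (Y ω) ∂ν = ∫⁻ ω, ENNReal.ofReal (max (Y ω) 0) ∂ν := by
      apply lintegral_congr
      intro ω
      rcases le_total 0 (Y ω) with h | h
      · rw [max_eq_left h]
      · rw [max_eq_right h, ENNReal.ofReal_eq_zero.mpr h, ENNReal.ofReal_zero]
    rw [h2, lintegral_eq_lintegral_meas_lt (f := fun ω => max (Y ω) 0) ν
      (Eventually.of_forall fun ω => le_max_right _ _)
      (by exact (hY.mono_ac hνac).max aemeasurable_const)]
    apply setLIntegral_congr_fun measurableSet_Ioi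
    intro t ht
    beta_reduce
    congr 1
    ext ω
    simp only [mem_setOf_eq, lt_max_iff, mem_Ioi] at *
    constructor
    · rintro (h | h)
      · exact h
      · exact absurd ht (not_lt.mpr h.le)
    · intro h; exact Or.inl h
  have hlayerneg : ∀ (Y : Ω → ℝ), AEMeasurable Y P →
      ∫⁻ ω, ENNReal.ofReal (-(ξ ω * Y ω)) ∂P = ∫⁻ t in Ioi (0:ℝ), ν {ω | Y ω < -t} := by
    intro Y hY
    have h1 : ∫⁻ ω, ENNReal.ofReal (-(ξ ω * Y ω)) ∂P
        = ∫⁻ ω, ENNReal.ofReal (ξ ω * (-(Y ω))) ∂P := by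
      apply lintegral_congr
      intro ω
      ring_nf
    rw [h1, hlayer (fun ω => -(Y ω)) hY.neg]
    apply lintegral_congr
    intro t
    congr 1
    ext ω
    simp only [mem_setOf_eq]
    constructor <;> intro h <;> linarith
  -- finiteness
  have hfin : ∀ (f : Ω → ℝ), Integrable f P → ∫⁻ ω, ENNReal.ofReal (f ω) ∂P ≠ ⊤ := by
    intro f hf
    refine ne_of_lt (lt_of_le_of_lt (lintegral_mono fun ω => ?_) hf.2)
    rw [Real.enorm_eq_ofReal_abs]
    exact ENNReal.ofReal_le_ofReal (le_abs_self _)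
  have hfinXp : ∫⁻ ω, ENNReal.ofReal (ξ ω * X ω) ∂P ≠ ⊤ := hfin _ hint1
  have hfinXn : ∫⁻ ω, ENNReal.ofReal (-(ξ ω * X ω)) ∂P ≠ ⊤ := hfin _ hint1.neg
  have hfinSp : ∫⁻ ω, ENNReal.ofReal (ξ ω * Xstar ω) ∂P ≠ ⊤ := hfin _ hint2
  have hfinSn : ∫⁻ ω, ENNReal.ofReal (-(ξ ω * Xstar ω)) ∂P ≠ ⊤ := hfin _ hint2.neg
  -- comparisons
  have hcomp1 : ∫⁻ ω, ENNReal.ofReal (ξ ω * Xstar ω) ∂P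
      ≤ ∫⁻ ω, ENNReal.ofReal (ξ ω * X ω) ∂P := by
    rw [hlayer X hXm.aemeasurable, hlayer Xstar hXsaem]
    exact lintegral_mono fun t => key_gt t
  have hcomp2 : ∫⁻ ω, ENNReal.ofReal (-(ξ ω * X ω)) ∂P
      ≤ ∫⁻ ω, ENNReal.ofReal (-(ξ ω * Xstar ω)) ∂P := by
    rw [hlayerneg X hXm.aemeasurable, hlayerneg Xstar hXsaem]
    exact lintegral_mono fun t => key_lt (-t)
  rw [integral_eq_lintegral_pos_part_sub_lintegral_neg_part hint2,
    integral_eq_lintegral_pos_part_sub_lintegral_neg_part hint1]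
  have h1 := ENNReal.toReal_mono hfinXp hcomp1
  have h2 := ENNReal.toReal_mono hfinSn hcomp2
  exact sub_le_sub h1 h2
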